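/- Let A, B ⊆ ℝⁿ be nonempty closed sets, λ > 0, μ > 0, ζ ∈ (0,1], xᵏ ∈ A and yᵏ ∈ B. Suppose x' ∈ A satisfies (1/2)‖x' − yᵏ‖² + (1/(2λ))‖x' − xᵏ‖² ≤ (1/2)‖x − yᵏ‖² + (1/(2λ))‖x − xᵏ‖² for all x ∈ A. Define Q(y) = (1/(2μ))‖y − yᵏ‖² + (1/2)‖x' − y‖² − (1/2)‖x' − yᵏ‖², let ŷ ∈ B satisfy Q(ŷ) ≤ Q(b) for all b ∈ B, and let y' ∈ B satisfy Q(y') ≤ ζ·Q(ŷ). Set γ = −((1−ζ)/ζ)·Q(ŷ) and ρ² = (1/μ)‖ŷ − yᵏ‖² − 2((1−ζ)/ζ)·Q(y') (which is nonnegative). Then (1/2)‖x' − y'‖² ≤ (1/2)‖x' − ŷ‖² + (1/2)ρ² ≤ (1/2)‖xᵏ − yᵏ‖² + γ. -/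

import Mathlib

theorem stmt_6 {n : ℕ} (A B : Set (EuclideanSpace ℝ (Fin n)))
    (hAne : A.Nonempty) (hAclosed : IsClosed A)
    (hBne : B.Nonempty) (hBclosed : IsClosed B)
    (lam mu ζ : ℝ) (hlam : 0 < lam) (hmu : 0 < mu) (hζ : ζ ∈ Set.Ioc (0 : ℝ) 1)
    (xk : EuclideanSpace ℝ (Fin n)) (hxk : xk ∈ A)
    (yk : EuclideanSpace ℝ (Fin n)) (hyk : yk ∈ B)
    (x' : EuclideanSpace ℝ (Fin n)) (hx'A : x' ∈ A)
    (hx'min : ∀ x ∈ A,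
      (1 / 2) * ‖x' - yk‖ ^ 2 + (1 / (2 * lam)) * ‖x' - xk‖ ^ 2 ≤
        (1 / 2) * ‖x - yk‖ ^ 2 + (1 / (2 * lam)) * ‖x - xk‖ ^ 2)
    (Q : EuclideanSpace ℝ (Fin n) → ℝ)
    (hQ : ∀ y, Q y =
      (1 / (2 * mu)) * ‖y - yk‖ ^ 2 + (1 / 2) * ‖x' - y‖ ^ 2 - (1 / 2) * ‖x' - yk‖ ^ 2)
    (yhat : EuclideanSpace ℝ (Fin n)) (hyhatB : yhat ∈ B)
    (hyhatmin : ∀ b ∈ B, Q yhat ≤ Q b)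
    (y' : EuclideanSpace ℝ (Fin n)) (hy'B : y' ∈ B)
    (hy' : Q y' ≤ ζ * Q yhat)
    (γ rhosq : ℝ)
    (hγ : γ = -((1 - ζ) / ζ) * Q yhat)
    (hrhosq : rhosq = (1 / mu) * ‖yhat - yk‖ ^ 2 - 2 * ((1 - ζ) / ζ) * Q y') :
    0 ≤ rhosq ∧
      (1 / 2) * ‖x' - y'‖ ^ 2 ≤ (1 / 2) * ‖x' - yhat‖ ^ 2 + (1 / 2) * rhosq ∧
        (1 / 2) * ‖x' - yhat‖ ^ 2 + (1 / 2) * rhosq ≤ (1 / 2) * ‖xk - yk‖ ^ 2 + γ := by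
  obtain ⟨hζ0, hζ1⟩ := hζ
  have hc : 0 ≤ (1 - ζ) / ζ := div_nonneg (by linarith) hζ0.le
  have hQyk : Q yk = 0 := by
    rw [hQ yk]; simp
  have hQhat0 : Q yhat ≤ 0 := hQyk ▸ hyhatmin yk hyk
  have hQhatle : Q yhat ≤ Q y' := hyhatmin y' hy'B
  have hQy'0 : Q y' ≤ 0 := le_trans hy' (by nlinarith)
  -- auxiliary nonneg terms
  have hn1 : 0 ≤ (1 / (2 * mu)) * ‖y' - yk‖ ^ 2 := by positivity
  have hn2 : 0 ≤ (1 / mu) * ‖yhat - yk‖ ^ 2 := by positivity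
  have hn3 : 0 ≤ (1 / (2 * lam)) * ‖x' - xk‖ ^ 2 := by positivity
  have heq : 1 + (1 - ζ) / ζ = 1 / ζ := by field_simp; ring
  have key1 : Q y' + ((1 - ζ) / ζ) * Q y' ≤ Q yhat := by
    have h1 : (1 / ζ) * Q y' ≤ Q yhat := by
      rw [div_mul_eq_mul_div, div_le_iff₀ hζ0]
      linarith [hy']
    nlinarith [heq]
  have key2 : Q yhat + ((1 - ζ) / ζ) * Q yhat ≤ ((1 - ζ) / ζ) * Q y' := by
    have := mul_le_mul_of_nonneg_left hQhatle hc
    linarith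
  have hx : (1 / 2) * ‖x' - yk‖ ^ 2 ≤ (1 / 2) * ‖xk - yk‖ ^ 2 := by
    have h := hx'min xk hxk
    simp only [sub_self, norm_zero] at h
    nlinarith
  have hQy' := hQ y'
  have hmm : (1 / 2) * ((1 / mu) * ‖yhat - yk‖ ^ 2) = (1 / (2 * mu)) * ‖yhat - yk‖ ^ 2 := by
    ring
  have hQyhat := hQ yhat
  refine ⟨?_, ?_, ?_⟩
  · rw [hrhosq]; nlinarith
  · rw [hrhosq]; linarith
  · rw [hrhosq, hγ]; linarith
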